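/- Every backward unilateral weighted shift T on ℓ²(ℕ) that is coarsely J-class on an open cone C ⊆ ℓ²(ℕ) (i.e., C ⊆ J(x,T,d) for some x and d > 0) satisfies C ⊆ J(0,T). -/

import Mathlib

open Filter Topology

/-- The extended limit set `J(x,T)` on `ℓ²(ℕ)`. -/
def jSetL2 (T : lp (fun _ : ℕ => ℂ) 2 →L[ℂ] lp (fun _ : ℕ => ℂ) 2)
    (x : lp (fun _ : ℕ => ℂ) 2) : Set (lp (fun _ : ℕ => ℂ) 2) :=
  {y | ∃ k : ℕ → ℕ, StrictMono k ∧ (∀ n, 0 < k n) ∧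
    ∃ u : ℕ → lp (fun _ : ℕ => ℂ) 2, Tendsto u atTop (𝓝 x) ∧
      Tendsto (fun n => (T ^ k n) (u n)) atTop (𝓝 y)}

/-- The coarse extended limit set `J(x,T,d)` on `ℓ²(ℕ)`. -/
def jCoarseL2 (T : lp (fun _ : ℕ => ℂ) 2 →L[ℂ] lp (fun _ : ℕ => ℂ) 2)
    (x : lp (fun _ : ℕ => ℂ) 2) (d : ℝ) : Set (lp (fun _ : ℕ => ℂ) 2) :=
  {y | ∃ k : ℕ → ℕ, StrictMono k ∧ (∀ n, 0 < k n) ∧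
    ∃ u : ℕ → lp (fun _ : ℕ => ℂ) 2, Tendsto u atTop (𝓝 x) ∧
      ∀ n, ‖(T ^ k n) (u n) - y‖ < d}

/-- Open cone in `ℓ²(ℕ)`. -/
def IsOpenConeL2 (C : Set (lp (fun _ : ℕ => ℂ) 2)) : Prop :=
  IsOpen C ∧ C.Nonempty ∧ ∀ x ∈ C, ∀ r : ℝ, 0 < r → (r : ℂ) • x ∈ C

theorem coarsely_jClass_backward_shift_subset_jSet_zero
    (T : lp (fun _ : ℕ => ℂ) 2 →L[ℂ] lp (fun _ : ℕ => ℂ) 2)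
    (w : ℕ → ℝ) (hw : ∀ n, 0 < w n)
    (hT : ∀ (a : lp (fun _ : ℕ => ℂ) 2) (n : ℕ), (T a) n = (w (n + 1) : ℂ) * a (n + 1))
    (x : lp (fun _ : ℕ => ℂ) 2) (d : ℝ) (hd : 0 < d)
    (C : Set (lp (fun _ : ℕ => ℂ) 2)) (hC : IsOpenConeL2 C)
    (hJ : C ⊆ jCoarseL2 T x d) :
    C ⊆ jSetL2 T 0 := by
  intro y hy
  -- For each N, (N+1) • y ∈ C ⊆ jCoarseL2 T x d
  have hmem : ∀ N : ℕ, ∃ k : ℕ → ℕ, StrictMono k ∧ (∀ n, 0 < k n) ∧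
      ∃ u : ℕ → lp (fun _ : ℕ => ℂ) 2, Tendsto u atTop (𝓝 x) ∧
        ∀ n, ‖(T ^ k n) (u n) - (((N : ℝ) + 1 : ℝ) : ℂ) • y‖ < d := by
    intro N
    exact hJ (hC.2.2 y hy ((N : ℝ) + 1) (by positivity))
  choose k hk hkpos u hu hub using hmem
  -- tail index where ‖u N n - x‖ < 1
  have hM : ∀ N : ℕ, ∃ M : ℕ, ∀ n ≥ M, ‖u N n - x‖ < 1 := by
    intro N
    have h := (hu N).eventually (Metric.ball_mem_nhds x one_pos)
    rw [eventually_atTop] at h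
    obtain ⟨M, hM⟩ := h
    exact ⟨M, fun n hn => by simpa [dist_eq_norm] using hM n hn⟩
  choose M hMs using hM
  -- diagonal index sequence
  let φ : ℕ → ℕ := fun N => Nat.rec (M 0) (fun N ih => max (M (N + 1)) (k N ih + 1)) N
  have hφ0 : φ 0 = M 0 := rfl
  have hφS : ∀ N, φ (N + 1) = max (M (N + 1)) (k N (φ N) + 1) := fun N => rfl
  have hφM : ∀ N, M N ≤ φ N := by
    intro N
    cases N with
    | zero => exact le_of_eq hφ0.symm
    | succ N => rw [hφS]; exact le_max_left _ _
  set K : ℕ → ℕ := fun N => k N (φ N) with hK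
  have hKmono : StrictMono K := by
    apply strictMono_nat_of_lt_succ
    intro N
    have h1 : k N (φ N) + 1 ≤ φ (N + 1) := by rw [hφS]; exact le_max_right _ _
    have h2 : φ (N + 1) ≤ k (N + 1) (φ (N + 1)) := (hk (N + 1)).le_apply
    show k N (φ N) < k (N + 1) (φ (N + 1))
    omega
  have hKpos : ∀ N, 0 < K N := fun N => hkpos N (φ N)
  -- the vectors
  set v : ℕ → lp (fun _ : ℕ => ℂ) 2 :=
    fun N => ((((N : ℝ) + 1)⁻¹ : ℝ) : ℂ) • u N (φ N) with hv
  have hnormc : ∀ N : ℕ, ‖((((N : ℝ) + 1)⁻¹ : ℝ) : ℂ)‖ = ((N : ℝ) + 1)⁻¹ := by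
    intro N
    rw [Complex.norm_real, Real.norm_eq_abs, abs_of_pos (by positivity)]
  have hubd : ∀ N : ℕ, ‖u N (φ N)‖ ≤ ‖x‖ + 1 := by
    intro N
    have h1 := hMs N (φ N) (hφM N)
    have h2 := norm_sub_norm_le (u N (φ N)) x
    linarith
  have hinv0 : Tendsto (fun N : ℕ => ((N : ℝ) + 1)⁻¹) atTop (𝓝 0) := by
    simpa [one_div] using tendsto_one_div_add_atTop_nhds_zero_nat (𝕜 := ℝ)
  refine ⟨K, hKmono, hKpos, v, ?_, ?_⟩
  · -- v → 0
    rw [tendsto_zero_iff_norm_tendsto_zero]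
    apply squeeze_zero (fun N => norm_nonneg _)
      (g := fun N : ℕ => ((N : ℝ) + 1)⁻¹ * (‖x‖ + 1))
    · intro N
      rw [hv]
      simp only [norm_smul, hnormc]
      exact mul_le_mul_of_nonneg_left (hubd N) (by positivity)
    · simpa using hinv0.mul_const (‖x‖ + 1)
  · -- T^K v → y
    rw [tendsto_iff_norm_sub_tendsto_zero]
    apply squeeze_zero (fun N => norm_nonneg _)
      (g := fun N : ℕ => ((N : ℝ) + 1)⁻¹ * d)
    · intro N
      have key : (T ^ K N) (v N) - y =
          ((((N : ℝ) + 1)⁻¹ : ℝ) : ℂ) •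
            ((T ^ K N) (u N (φ N)) - (((N : ℝ) + 1 : ℝ) : ℂ) • y) := by
        rw [hv, map_smul, smul_sub, smul_smul]
        congr 1
        rw [← Complex.ofReal_mul, inv_mul_cancel₀ (by positivity : ((N : ℝ) + 1) ≠ 0)]
        simp
      rw [key, norm_smul, hnormc]
      exact mul_le_mul_of_nonneg_left (le_of_lt (hub N (φ N))) (by positivity)
    · simpa using hinv0.mul_const d
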